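/- For real numbers x, T > 0 and integer m ≥ 1, if T > (4m^2)^m and x/(log x)^m < T (with x > e so log x > 1), then x < 2^m · T · (log T)^m. -/
import Mathlib


theorem guzman_luca (m : ℕ) (hm : 1 ≤ m) (x T : ℝ) (hT : 0 < T)
    (hT2 : (4 * (m : ℝ) ^ 2) ^ m < T)
    (hx : Real.exp 1 < x)
    (hxT : x / (Real.log x) ^ m < T) :
    x < 2 ^ m * T * (Real.log T) ^ m := by
  have hm1 : (1:ℝ) ≤ m := by exact_mod_cast hm
  have hx0 : 0 < x := lt_trans (Real.exp_pos 1) hx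
  set L := Real.log x with hLdef
  have hL1 : 1 < L := by
    have := Real.log_lt_log (Real.exp_pos 1) hx
    rwa [Real.log_exp] at this
  have hL0 : 0 < L := lt_trans one_pos hL1
  have hLm : 0 < L ^ m := pow_pos hL0 m
  have h1 : x < T * L ^ m := by
    rw [div_lt_iff₀ hLm] at hxT; linarith [hxT]
  have hT1 : 1 < T := by
    have : (1:ℝ) ≤ (4 * (m:ℝ)^2)^m := one_le_pow₀ (by nlinarith)
    linarith
  have hlogT : 0 < Real.log T := Real.log_pos hT1
  by_cases hcase : L ≤ 2 * Real.log T
  · calc x < T * L ^ m := h1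
      _ ≤ T * (2 * Real.log T) ^ m := by
          apply mul_le_mul_of_nonneg_left _ hT.le
          exact pow_le_pow_left₀ hL0.le hcase m
      _ = 2 ^ m * T * (Real.log T) ^ m := by rw [mul_pow]; ring
  · exfalso
    push_neg at hcase
    have hlogL : 0 < Real.log L := Real.log_pos hL1
    have h2 : L < Real.log T + m * Real.log L := by
      have := Real.log_lt_log hx0 h1
      rwa [Real.log_mul (ne_of_gt hT) (ne_of_gt hLm), Real.log_pow] at this
    have h3 : L < 2 * m * Real.log L := by linarith
    have h4m : (0:ℝ) < 4 * m := by linarith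
    have hlb : Real.log L ≤ Real.log (4 * m) + (L / (4 * m) - 1) := by
      have hrw : (4 * (m:ℝ)) * (L / (4 * m)) = L := by field_simp
      calc Real.log L = Real.log (4*(m:ℝ)) + Real.log (L / (4*m)) := by
            rw [← Real.log_mul (ne_of_gt h4m) (by positivity), hrw]
        _ ≤ Real.log (4*m) + (L / (4*m) - 1) := by
            have := Real.log_le_sub_one_of_pos (show 0 < L/(4*(m:ℝ)) by positivity)
            linarith
    have h2mL : 2 * (m:ℝ) * (L / (4*m)) = L / 2 := by
      field_simp; ring
    have h5 : L < 2 * m * Real.log (4*m) + L / 2 - 2 * m := by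
      nlinarith [h3, hlb]
    have h6 : Real.log T < 2 * m * (Real.log (4*m) - 1) := by linarith
    have h7 : T < Real.exp (2 * m * (Real.log (4*m) - 1)) :=
      calc T = Real.exp (Real.log T) := (Real.exp_log hT).symm
        _ < _ := Real.exp_lt_exp.mpr h6
    have he2 : (2:ℝ) ≤ Real.exp 1 := by
      have := Real.add_one_le_exp (1:ℝ); linarith
    have hexp : Real.exp (2 * (m:ℝ) * (Real.log (4*m) - 1))
        = (4 * m / Real.exp 1) ^ (2 * m) := by
      have hc : (2 * (m:ℝ)) * (Real.log (4*m) - 1)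
          = ((2 * m : ℕ) : ℝ) * (Real.log (4*m) - 1) := by push_cast; ring
      rw [hc, Real.exp_nat_mul, Real.exp_sub, Real.exp_log h4m]
    have h8 : (4 * (m:ℝ) / Real.exp 1) ^ (2 * m) ≤ (4 * (m:ℝ)^2)^m := by
      have ha0 : (0:ℝ) ≤ 4 * (m:ℝ) / Real.exp 1 := by positivity
      have ha : 4 * (m:ℝ) / Real.exp 1 ≤ 2 * m := by
        rw [div_le_iff₀ (Real.exp_pos 1)]; nlinarith
      rw [two_mul, pow_add, ← mul_pow]
      exact pow_le_pow_left₀ (by positivity) (by nlinarith) m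
    rw [hexp] at h7
    linarith
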